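/- arXiv:0806.3687 — 2 statements merged into one kernel-verified Lean document; each statement's English description precedes it below -/
import Mathlib

section
/- Let M be a compact metrizable topological space, let B̃ and B be Polish spaces, and let Λ : B̃ → B be an n-fold covering map for some positive integer n (that is, a covering map each of whose fibers has exactly n elements). Then every continuous map ξ : M → B admits a Borel measurable lift, i.e. there exists a map ξ̃ : M → B̃ which is measurable with respect to the Borel σ-algebras and satisfies Λ ∘ ξ̃ = ξ. -/
/-- measurable lifts of continuous maps through an `n`-fold covering map
between Polish spaces, from a compact metrizable space. -/
theorem measurable_lift_of_covering
    {M B' B : Type*}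
    [TopologicalSpace M] [CompactSpace M] [TopologicalSpace.MetrizableSpace M]
    [TopologicalSpace B'] [PolishSpace B']
    [TopologicalSpace B] [PolishSpace B]
    [MeasurableSpace M] [BorelSpace M]
    [MeasurableSpace B'] [BorelSpace B']
    (n : ℕ) (hn : 0 < n)
    (Λ : B' → B) (hΛ : IsCoveringMap Λ)
    (hfib : ∀ b : B, Nat.card (Λ ⁻¹' {b}) = n)
    (ξ : M → B) (hξ : Continuous ξ) :
    ∃ ξ' : M → B', Measurable ξ' ∧ Λ ∘ ξ' = ξ := by
  classical
  letI : MeasurableSpace B := borel B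
  haveI : BorelSpace B := ⟨rfl⟩
  by_cases hM : IsEmpty M
  · exact ⟨fun m => (hM.elim m), measurable_of_empty _, funext fun m => (hM.elim m)⟩
  rw [not_isEmpty_iff] at hM
  -- Λ is surjective since fibers have n > 0 elements
  have hsurj : Function.Surjective Λ := by
    intro b
    have hpos : 0 < Nat.card (Λ ⁻¹' {b}) := (hfib b) ▸ hn
    obtain ⟨⟨x, hx⟩⟩ := (Nat.card_pos_iff.mp hpos).1
    exact ⟨x, hx⟩
  have hB' : Nonempty B' := ⟨Classical.choose (hsurj (ξ (Classical.arbitrary M)))⟩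
  -- local homeomorphism charts
  have hloc := hΛ.isLocalHomeomorph
  choose e he hΛe using hloc
  -- countable subcover of the sources
  obtain ⟨T, hTc, hTu⟩ := TopologicalSpace.isOpen_iUnion_countable
    (fun x : B' => (e x).source) (fun x => (e x).open_source)
  have hTuniv : ⋃ x ∈ T, (e x).source = Set.univ := by
    rw [hTu]
    exact Set.eq_univ_of_forall fun x => Set.mem_iUnion.2 ⟨x, he x⟩
  have hTne : T.Nonempty := by
    rcases T.eq_empty_or_nonempty with h | h
    · exfalso
      rw [h] at hTuniv
      simp only [Set.mem_empty_iff_false, Set.iUnion_of_empty, Set.iUnion_empty] at hTuniv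
      exact (Set.eq_empty_iff_forall_notMem.mp hTuniv.symm) (Classical.arbitrary B')
        (Set.mem_univ _)
    · exact h
  obtain ⟨f, hf⟩ := Set.Countable.exists_eq_range hTc hTne
  set c : ℕ → OpenPartialHomeomorph B' B := fun i => e (f i) with hc
  -- every point of B is in some target
  have hcov : ∀ b : B, ∃ i, b ∈ (c i).target := by
    intro b
    obtain ⟨x, rfl⟩ := hsurj b
    have hx : x ∈ ⋃ y ∈ T, (e y).source := hTuniv ▸ Set.mem_univ x
    obtain ⟨y, hyT, hxy⟩ := Set.mem_iUnion₂.1 hx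
    rw [hf] at hyT
    obtain ⟨i, rfl⟩ := hyT
    refine ⟨i, ?_⟩
    have hΛx : Λ x = (c i) x := congrFun (hΛe (f i)) x
    rw [hΛx]
    exact (c i).map_source hxy
  set k : B → ℕ := fun b => Nat.find (hcov b) with hk
  set s : B → B' := fun b => (c (k b)).symm b with hs
  have hsec : ∀ b, Λ (s b) = b := by
    intro b
    have hb : b ∈ (c (k b)).target := Nat.find_spec (hcov b)
    have h1 : Λ ((c (k b)).symm b) = (c (k b)) ((c (k b)).symm b) :=
      congrFun (hΛe (f (k b))) _
    simp only [hs]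
    rw [h1, (c (k b)).right_inv hb]
  have hsmeas : Measurable s := by
    apply measurable_of_isOpen
    intro O hO
    have hsplit : s ⁻¹' O = ⋃ i, ({b | k b = i} ∩ ((c i).symm ⁻¹' O)) := by
      ext b
      simp only [Set.mem_preimage, Set.mem_iUnion, Set.mem_inter_iff, Set.mem_setOf_eq]
      constructor
      · intro h; exact ⟨k b, rfl, h⟩
      · rintro ⟨i, hi, h⟩
        show (c (k b)).symm b ∈ O
        rw [show k b = i from hi]; exact h
    rw [hsplit]
    refine MeasurableSet.iUnion fun i => ?_
    have hAsub : {b | k b = i} ⊆ (c i).target := by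
      intro b hb
      have h2 := Nat.find_spec (hcov b)
      rw [show Nat.find (hcov b) = i from hb] at h2
      exact h2
    have hA : MeasurableSet {b | k b = i} := by
      have heq : {b | k b = i} = (c i).target ∩ ⋂ j < i, ((c j).target)ᶜ := by
        ext b
        constructor
        · intro hbi
          have hbi' : Nat.find (hcov b) = i := hbi
          rw [Nat.find_eq_iff] at hbi'
          exact ⟨hbi'.1, Set.mem_iInter₂.2 fun j hj => hbi'.2 j hj⟩
        · rintro ⟨h1, h2⟩
          show Nat.find (hcov b) = i
          rw [Nat.find_eq_iff]
          exact ⟨h1, fun j hj => Set.mem_iInter₂.1 h2 j hj⟩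
      rw [heq]
      exact (c i).open_target.measurableSet.inter
        (MeasurableSet.biInter (Set.to_countable _) fun j _ =>
          (c j).open_target.measurableSet.compl)
    -- continuity of symm on target
    obtain ⟨u, hu, hueq⟩ := continuousOn_iff'.1 ((c i).continuousOn_symm) O hO
    have : {b | k b = i} ∩ ((c i).symm ⁻¹' O) = {b | k b = i} ∩ u := by
      ext b
      simp only [Set.mem_inter_iff, Set.mem_preimage, Set.mem_setOf_eq]
      constructor
      · rintro ⟨h1, h2⟩
        have : b ∈ u ∩ (c i).target := hueq ▸ ⟨h2, hAsub h1⟩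
        exact ⟨h1, this.1⟩
      · rintro ⟨h1, h2⟩
        have : b ∈ (c i).symm ⁻¹' O ∩ (c i).target := hueq ▸ ⟨h2, hAsub h1⟩
        exact ⟨h1, this.1⟩
    rw [this]
    exact hA.inter hu.measurableSet
  refine ⟨s ∘ ξ, hsmeas.comp hξ.measurable, ?_⟩
  funext m
  exact hsec (ξ m)
end

section
/- Let M be a compact metrizable topological space, let B̃ and B be Polish spaces, let π : B → M and π̃ : B̃ → M be continuous maps, and let Λ : B̃ → B be an n-fold covering map (for some positive integer n) satisfying π ∘ Λ = π̃. Then every continuous section s : M → B of π (that is, a continuous map with π ∘ s = id_M) admits a Borel measurable lift s̃ : M → B̃ with Λ ∘ s̃ = s; in particular π̃ ∘ s̃ = id_M, so s̃ is a Borel measurable section of π̃. -/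
open Set
open scoped Classical

/-- piecewise measurability lemma -/
theorem aux_piecewise_measurable {M B' : Type*}
    [TopologicalSpace M] [MeasurableSpace M] [OpensMeasurableSpace M]
    [TopologicalSpace B'] [MeasurableSpace B'] [BorelSpace B']
    {W : Set M} (hW : IsOpen W) {g f : M → B'}
    (hg : ContinuousOn g W) (hf : Measurable f) :
    Measurable (W.piecewise g f) := by
  refine measurable_of_isOpen fun V hV => ?_
  rw [Set.piecewise_preimage, Set.ite]
  refine MeasurableSet.union ?_ ((hf hV.measurableSet).diff hW.measurableSet)
  rw [Set.inter_comm]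
  exact (hg.isOpen_inter_preimage hW hV).measurableSet

theorem aux_list_glue {M B' : Type*} {ι : Type*}
    [TopologicalSpace M] [MeasurableSpace M] [OpensMeasurableSpace M]
    [TopologicalSpace B'] [MeasurableSpace B'] [BorelSpace B'] [Nonempty B']
    (W : ι → Set M) (hW : ∀ i, IsOpen (W i))
    (g : ι → M → B') (hg : ∀ i, ContinuousOn (g i) (W i)) :
    ∀ L : List ι, ∃ f : M → B', Measurable f ∧
      ∀ x ∈ ⋃ i ∈ L, W i, ∃ i ∈ L, x ∈ W i ∧ f x = g i x := by
  intro L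
  induction L with
  | nil =>
      exact ⟨fun _ => Classical.arbitrary B', measurable_const, by simp⟩
  | cons i L ih =>
      obtain ⟨f, hfm, hf⟩ := ih
      refine ⟨(W i).piecewise (g i) f,
        aux_piecewise_measurable (hW i) (hg i) hfm, fun x hx => ?_⟩
      by_cases hxi : x ∈ W i
      · exact ⟨i, by simp, hxi, Set.piecewise_eq_of_mem _ _ _ hxi⟩
      · have hx' : x ∈ ⋃ j ∈ L, W j := by
          simp only [List.mem_cons, Set.mem_iUnion, exists_prop] at hx ⊢
          rcases hx with ⟨j, hj, hxj⟩
          rcases hj with rfl | hj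
          · exact absurd hxj hxi
          · exact ⟨j, hj, hxj⟩
        obtain ⟨j, hj, hxj, hfx⟩ := hf x hx'
        exact ⟨j, by simp [hj], hxj, by rwa [Set.piecewise_eq_of_notMem _ _ _ hxi]⟩

/-- a continuous section of a bundle admits a Borel measurable lift
through an `n`-fold covering bundle map. -/
theorem measurable_section_lift_of_covering
    {M B' B : Type*}
    [TopologicalSpace M] [CompactSpace M] [TopologicalSpace.MetrizableSpace M]
    [TopologicalSpace B'] [PolishSpace B']
    [TopologicalSpace B] [PolishSpace B]
    [MeasurableSpace M] [BorelSpace M]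
    [MeasurableSpace B'] [BorelSpace B']
    (n : ℕ) (hn : 0 < n)
    (π : B → M) (hπ : Continuous π)
    (π' : B' → M) (hπ' : Continuous π')
    (Λ : B' → B) (hΛ : IsCoveringMap Λ)
    (hfib : ∀ b : B, Nat.card (Λ ⁻¹' {b}) = n)
    (hcomm : π ∘ Λ = π')
    (s : M → B) (hs : Continuous s) (hsec : π ∘ s = id) :
    ∃ s' : M → B', Measurable s' ∧ Λ ∘ s' = s ∧ π' ∘ s' = id := by
  rcases isEmpty_or_nonempty M with hM | hM
  · exact ⟨fun m => (IsEmpty.false m).elim, measurable_of_empty _,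
      funext fun m => (IsEmpty.false m).elim, funext fun m => (IsEmpty.false m).elim⟩
  -- fibers are nonempty
  have hfibne : ∀ b : B, Nonempty (Λ ⁻¹' {b} : Set B') := by
    intro b
    have h1 : 0 < Nat.card (Λ ⁻¹' {b} : Set B') := by rw [hfib b]; exact hn
    exact (Nat.card_pos_iff.mp h1).1
  have hB' : Nonempty B' := ⟨(Classical.choice (hfibne (s (Classical.arbitrary M)))).1⟩
  -- local data
  set e : (b : B) → Bundle.Trivialization (Λ ⁻¹' {b} : Set B') Λ := fun b => (hΛ b).toTrivialization
    with he
  have hmem : ∀ b : B, b ∈ (e b).baseSet := fun b => (hΛ b).mem_toTrivialization_baseSet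
  set f0 : (b : B) → (Λ ⁻¹' {b} : Set B') := fun b => Classical.choice (hfibne b) with hf0
  set g : B → M → B' := fun b m => (e b).toOpenPartialHomeomorph.symm (s m, f0 b) with hg
  set W : B → Set M := fun b => s ⁻¹' (e b).baseSet with hWdef
  have hWopen : ∀ b, IsOpen (W b) := fun b => (e b).open_baseSet.preimage hs
  have hgs : ∀ b, ∀ m ∈ W b, Λ (g b m) = s m := by
    intro b m hm
    exact (e b).proj_symm_apply ((e b).mem_target.mpr hm)
  have hgc : ∀ b, ContinuousOn (g b) (W b) := by
    intro b
    show ContinuousOn ((e b).toOpenPartialHomeomorph.symm ∘ fun m => (s m, f0 b)) (W b)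
    exact (e b).toOpenPartialHomeomorph.continuousOn_symm.comp
      ((hs.prodMk continuous_const).continuousOn)
      (fun m hm => (e b).mem_target.mpr hm)
  -- compactness: finite subcover indexed by points of M
  have hcov : (Set.univ : Set M) ⊆ ⋃ m : M, W (s m) :=
    fun m _ => Set.mem_iUnion.mpr ⟨m, hmem (s m)⟩
  obtain ⟨t, ht⟩ := isCompact_univ.elim_finite_subcover (fun m : M => W (s m))
    (fun m => hWopen (s m)) hcov
  obtain ⟨f, hfm, hf⟩ := aux_list_glue (fun m : M => W (s m)) (fun m => hWopen (s m))
    (fun m : M => g (s m)) (fun m => hgc (s m)) t.toList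
  have hfall : ∀ x : M, Λ (f x) = s x := by
    intro x
    have hx : x ∈ ⋃ i ∈ t.toList, W (s i) := by
      have := ht (Set.mem_univ x)
      simpa [Finset.mem_toList] using this
    obtain ⟨i, _, hxi, hfx⟩ := hf x hx
    rw [hfx]
    exact hgs (s i) x hxi
  refine ⟨f, hfm, funext hfall, funext fun x => ?_⟩
  have : π' (f x) = π (Λ (f x)) := (congrFun hcomm (f x)).symm
  rw [Function.comp_apply, this, hfall x]
  exact congrFun hsec x
end
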